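/- A Type-n vector field on S¹×S² has at least two independent first integrals: if χ = (P₁,P₂,P₃,P₄) is a vector field on S¹×S² whose components are all homogeneous polynomials of degree n, then χ(x₁²+x₂²) = 0 and χ(x₃²+x₄²) = 0, and the two polynomials x₁²+x₂² and x₃²+x₄² are algebraically independent over ℝ. -/

import Mathlib

open MvPolynomial

/-- The action of the polynomial vector field `χ = (P 0, P 1, P 2, P 3)` on a polynomial:
`χf = Σᵢ Pᵢ ∂f/∂xᵢ`. -/
noncomputable def chi (P : Fin 4 → MvPolynomial (Fin 4) ℝ)
    (f : MvPolynomial (Fin 4) ℝ) : MvPolynomial (Fin 4) ℝ :=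
  ∑ i, P i * pderiv i f

/-- `G_a = (x₁² + x₂² - a²)² + x₃² + x₄² - 1`, whose zero set is `S¹ × S²`. -/
noncomputable def Ga (a : ℝ) : MvPolynomial (Fin 4) ℝ :=
  (X 0 ^ 2 + X 1 ^ 2 - C (a ^ 2)) ^ 2 + X 2 ^ 2 + X 3 ^ 2 - 1

/-! ### Auxiliary lemmas about `chi` -/

lemma chi_add (P : Fin 4 → MvPolynomial (Fin 4) ℝ) (f g : MvPolynomial (Fin 4) ℝ) :
    chi P (f + g) = chi P f + chi P g := by
  simp [chi, map_add, mul_add, Finset.sum_add_distrib]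

lemma chi_sub (P : Fin 4 → MvPolynomial (Fin 4) ℝ) (f g : MvPolynomial (Fin 4) ℝ) :
    chi P (f - g) = chi P f - chi P g := by
  simp [chi, map_sub, mul_sub, Finset.sum_sub_distrib]

lemma chi_C (P : Fin 4 → MvPolynomial (Fin 4) ℝ) (r : ℝ) : chi P (C r) = 0 := by
  simp [chi, pderiv_C]

lemma chi_one (P : Fin 4 → MvPolynomial (Fin 4) ℝ) : chi P 1 = 0 := by
  simp [chi, pderiv_one]

lemma chi_sq (P : Fin 4 → MvPolynomial (Fin 4) ℝ) (f : MvPolynomial (Fin 4) ℝ) :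
    chi P (f ^ 2) = 2 * f * chi P f := by
  simp only [chi, pderiv_pow, Finset.mul_sum]
  refine Finset.sum_congr rfl fun i _ => ?_
  push_cast
  ring

/-! ### The scaling map `ψ : ℝ[x] → (ℝ[x])[t]`, `xᵢ ↦ xᵢ t` -/

noncomputable def psi4 : MvPolynomial (Fin 4) ℝ →ₐ[ℝ] Polynomial (MvPolynomial (Fin 4) ℝ) :=
  MvPolynomial.aeval (fun i => Polynomial.C (MvPolynomial.X i) * Polynomial.X)

lemma psi4_monomial (s : Fin 4 →₀ ℕ) (a : ℝ) :
    psi4 (monomial s a) = Polynomial.C (monomial s a) * Polynomial.X ^ (s.sum fun _ e => e) := by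
  rw [psi4, aeval_monomial, monomial_eq]
  simp only [mul_pow, ← Polynomial.C_pow]
  rw [Finsupp.prod, Finset.prod_mul_distrib, ← map_prod, Finset.prod_pow_eq_pow_sum]
  rw [Finsupp.sum, Finsupp.prod, map_mul, map_prod,
    IsScalarTower.algebraMap_apply ℝ (MvPolynomial (Fin 4) ℝ)
      (Polynomial (MvPolynomial (Fin 4) ℝ)), Polynomial.algebraMap_eq, algebraMap_eq]
  ring

lemma psi4_homog {f : MvPolynomial (Fin 4) ℝ} {d : ℕ} (hf : f.IsHomogeneous d) :
    psi4 f = Polynomial.C f * Polynomial.X ^ d := by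
  conv_lhs => rw [← f.support_sum_monomial_coeff]
  conv_rhs => rw [← f.support_sum_monomial_coeff]
  rw [map_sum, map_sum, Finset.sum_mul]
  refine Finset.sum_congr rfl fun s hs => ?_
  rw [psi4_monomial]
  congr 2
  have := hf (mem_support_iff.mp hs)
  simpa [Finsupp.weight, Finsupp.linearCombination, Finsupp.sum] using this

lemma psi4_eval_one (f : MvPolynomial (Fin 4) ℝ) :
    Polynomial.eval 1 (psi4 f) = f := by
  have : (Polynomial.evalRingHom (1 : MvPolynomial (Fin 4) ℝ)).comp
      (psi4 : MvPolynomial (Fin 4) ℝ →+* Polynomial (MvPolynomial (Fin 4) ℝ)) =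
      RingHom.id _ := by
    apply MvPolynomial.ringHom_ext <;> intro i <;> simp [psi4]
  exact DFunLike.congr_fun this f

/-! ### `expand 2` is injective -/

lemma expand_monomial' (p : ℕ) (s : Fin 2 →₀ ℕ) (a : ℝ) :
    expand p (monomial s a) = monomial (p • s) a := by
  rw [expand_monomial, monomial_eq]

lemma smul_finsupp_injective (p : ℕ) (hp : p ≠ 0) :
    Function.Injective (fun s : Fin 2 →₀ ℕ => p • s) := by
  intro s t h
  ext i
  have := DFunLike.congr_fun h i
  simp only [Finsupp.smul_apply, smul_eq_mul] at this
  exact Nat.eq_of_mul_eq_mul_left (Nat.pos_of_ne_zero hp) this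

lemma expand_inj (p : ℕ) (hp : p ≠ 0) :
    Function.Injective (expand p : MvPolynomial (Fin 2) ℝ →ₐ[ℝ] _) := by
  rw [injective_iff_map_eq_zero]
  intro f hf
  ext d
  have h1 : expand p f = ∑ d' ∈ f.support, monomial (p • d') (coeff d' f) := by
    conv_lhs => rw [← f.support_sum_monomial_coeff]
    rw [map_sum]
    exact Finset.sum_congr rfl fun d' _ => expand_monomial' p d' _
  have h2 : coeff (p • d) (expand p f) = coeff d f := by
    rw [h1, coeff_sum]
    rw [Finset.sum_eq_single d (fun b _ hbd => by
        rw [coeff_monomial, if_neg (fun h => hbd (smul_finsupp_injective p hp h))])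
      (fun hd => by rw [coeff_monomial, if_pos rfl, notMem_support_iff.mp hd])]
    rw [coeff_monomial, if_pos rfl]
  rw [hf, coeff_zero] at h2
  rw [coeff_zero, ← h2]

lemma alg_indep :
    AlgebraicIndependent ℝ
      ![(X 0 ^ 2 + X 1 ^ 2 : MvPolynomial (Fin 4) ℝ), X 2 ^ 2 + X 3 ^ 2] := by
  have hsq : AlgebraicIndependent ℝ ![(X 0 ^ 2 : MvPolynomial (Fin 2) ℝ), X 1 ^ 2] := by
    rw [algebraicIndependent_iff_injective_aeval]
    have : (aeval ![(X 0 ^ 2 : MvPolynomial (Fin 2) ℝ), X 1 ^ 2] :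
        MvPolynomial (Fin 2) ℝ →ₐ[ℝ] _) = expand 2 := by
      apply algHom_ext
      intro i
      fin_cases i <;> simp [expand_X]
    rw [this]
    exact expand_inj 2 two_ne_zero
  refine AlgebraicIndependent.of_comp
    (aeval ![X 0, 0, X 1, 0] : MvPolynomial (Fin 4) ℝ →ₐ[ℝ] MvPolynomial (Fin 2) ℝ) ?_
  have : (aeval ![(X 0 : MvPolynomial (Fin 2) ℝ), 0, X 1, 0]) ∘
      ![(X 0 ^ 2 + X 1 ^ 2 : MvPolynomial (Fin 4) ℝ), X 2 ^ 2 + X 3 ^ 2]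
      = ![(X 0 ^ 2 : MvPolynomial (Fin 2) ℝ), X 1 ^ 2] := by
    funext i
    fin_cases i <;> simp
  rw [this]
  exact hsq

/-! ### Main theorem -/


theorem stmt_11 (a : ℝ) (ha : 1 < a) (n : ℕ) (P : Fin 4 → MvPolynomial (Fin 4) ℝ)
    (hhom : ∀ i, (P i).IsHomogeneous n)
    (hvf : ∃ K : MvPolynomial (Fin 4) ℝ, chi P (Ga a) = K * Ga a) :
    chi P (X 0 ^ 2 + X 1 ^ 2) = 0 ∧
    chi P (X 2 ^ 2 + X 3 ^ 2) = 0 ∧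
    AlgebraicIndependent ℝ
      ![(X 0 ^ 2 + X 1 ^ 2 : MvPolynomial (Fin 4) ℝ), X 2 ^ 2 + X 3 ^ 2] := by
  obtain ⟨K, hK⟩ := hvf
  set H : MvPolynomial (Fin 4) ℝ := X 0 ^ 2 + X 1 ^ 2 with hHdef
  set Rp : MvPolynomial (Fin 4) ℝ := X 2 ^ 2 + X 3 ^ 2 with hRdef
  set A : MvPolynomial (Fin 4) ℝ := chi P H with hAdef
  set B : MvPolynomial (Fin 4) ℝ := chi P Rp with hBdef
  -- decomposition of `chi P (Ga a)`
  have e1 : Ga a = (H - C (a ^ 2)) ^ 2 + Rp - 1 := by rw [Ga, hHdef, hRdef]; ring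
  have hchiGa : chi P (Ga a) = 2 * (H - C (a ^ 2)) * A + B := by
    rw [e1, chi_sub, chi_add, chi_sq, chi_one, chi_sub, chi_C]
    ring
  -- homogeneity
  have h2X : ∀ i : Fin 4, (2 * X i : MvPolynomial (Fin 4) ℝ).IsHomogeneous 1 := by
    intro i
    convert (isHomogeneous_X ℝ i).C_mul (2 : ℝ) using 2
    exact (map_ofNat C 2).symm
  have hA : A = P 0 * (2 * X 0) + P 1 * (2 * X 1) := by
    rw [hAdef, hHdef]; simp [chi, Fin.sum_univ_four, pderiv_pow, pderiv_X]
  have hB : B = P 2 * (2 * X 2) + P 3 * (2 * X 3) := by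
    rw [hBdef, hRdef]; simp [chi, Fin.sum_univ_four, pderiv_pow, pderiv_X]
  have hAhom : A.IsHomogeneous (n + 1) := by
    rw [hA]; exact ((hhom 0).mul (h2X 0)).add ((hhom 1).mul (h2X 1))
  have hBhom : B.IsHomogeneous (n + 1) := by
    rw [hB]; exact ((hhom 2).mul (h2X 2)).add ((hhom 3).mul (h2X 3))
  have hHhom : H.IsHomogeneous 2 := by
    rw [hHdef]; exact (isHomogeneous_X_pow 0 2).add (isHomogeneous_X_pow 1 2)
  have hRhom : Rp.IsHomogeneous 2 := by
    rw [hRdef]; exact (isHomogeneous_X_pow 2 2).add (isHomogeneous_X_pow 3 2)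
  -- apply psi4
  have hpsiC : psi4 (C (a ^ 2)) = Polynomial.C (C (a ^ 2)) := by
    rw [psi4_homog (isHomogeneous_C _ _), pow_zero, mul_one]
  have hpsiCa : psi4 (C a) = Polynomial.C (C a) := by
    rw [psi4_homog (isHomogeneous_C _ _), pow_zero, mul_one]
  have hchi' : psi4 (chi P (Ga a)) =
      Polynomial.C (2 * (H * A)) * Polynomial.X ^ (n + 3) +
        Polynomial.C (B - 2 * C (a ^ 2) * A) * Polynomial.X ^ (n + 1) := by
    rw [hchiGa]
    simp only [map_add, map_mul, map_sub, map_pow, map_ofNat, map_one,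
      psi4_homog hAhom, psi4_homog hBhom, psi4_homog hHhom, hpsiC, hpsiCa]
    ring
  have hGa' : psi4 (Ga a) =
      Polynomial.C (H * H) * Polynomial.X ^ 4 +
        Polynomial.C (Rp - 2 * C (a ^ 2) * H) * Polynomial.X ^ 2 +
        Polynomial.C (C (a ^ 2) * C (a ^ 2) - 1) := by
    rw [e1]
    simp only [map_add, map_mul, map_sub, map_pow, map_ofNat, map_one,
      psi4_homog hHhom, psi4_homog hRhom, hpsiC, hpsiCa]
    ring
  set g : Polynomial (MvPolynomial (Fin 4) ℝ) :=
    Polynomial.C (H * H) * Polynomial.X ^ 4 +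
      Polynomial.C (Rp - 2 * C (a ^ 2) * H) * Polynomial.X ^ 2 +
      Polynomial.C (C (a ^ 2) * C (a ^ 2) - 1) with hgdef
  set r : Polynomial (MvPolynomial (Fin 4) ℝ) :=
    Polynomial.C (2 * (H * A)) * Polynomial.X ^ (n + 3) +
      Polynomial.C (B - 2 * C (a ^ 2) * A) * Polynomial.X ^ (n + 1) with hrdef
  have hmain : r = psi4 K * g := by
    rw [← hchi', hK, map_mul, hGa']
  -- facts about g
  have hc0 : (C (a ^ 2) * C (a ^ 2) - 1 : MvPolynomial (Fin 4) ℝ) ≠ 0 := by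
    rw [← map_mul, ← C_1, ← map_sub]
    rw [Ne, MvPolynomial.C_eq_zero]
    intro h
    have h1 : (1 : ℝ) < a ^ 2 := by nlinarith
    nlinarith
  have hgc0 : g.coeff 0 = C (a ^ 2) * C (a ^ 2) - 1 := by
    rw [hgdef]
    simp only [Polynomial.coeff_add, Polynomial.coeff_C_mul, Polynomial.coeff_X_pow,
      Polynomial.coeff_C]
    norm_num
  have hgne : g ≠ 0 := fun h => hc0 (by rw [← hgc0, h, Polynomial.coeff_zero])
  have hH0 : H ≠ 0 := by
    intro h
    have := congrArg (eval fun _ => (1 : ℝ)) h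
    simp [hHdef] at this
  have hgdeg : g.natDegree = 4 := by
    rw [hgdef]
    rw [Polynomial.natDegree_add_eq_left_of_natDegree_lt, Polynomial.natDegree_add_eq_left_of_natDegree_lt,
      Polynomial.natDegree_C_mul_X_pow 4 _ (mul_ne_zero hH0 hH0)]
    · calc (Polynomial.C (Rp - 2 * C (a ^ 2) * H) * Polynomial.X ^ 2).natDegree
          ≤ (Polynomial.X ^ 2 : Polynomial (MvPolynomial (Fin 4) ℝ)).natDegree :=
            Polynomial.natDegree_C_mul_le _ _
        _ < _ := by
            rw [Polynomial.natDegree_X_pow,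
              Polynomial.natDegree_C_mul_X_pow 4 _ (mul_ne_zero hH0 hH0)]
            omega
    · calc (Polynomial.C (C (a ^ 2) * C (a ^ 2) - 1) :
            Polynomial (MvPolynomial (Fin 4) ℝ)).natDegree = 0 := Polynomial.natDegree_C _
        _ < _ := by
            rw [Polynomial.natDegree_add_eq_left_of_natDegree_lt,
              Polynomial.natDegree_C_mul_X_pow 4 _ (mul_ne_zero hH0 hH0)]
            · omega
            · calc (Polynomial.C (Rp - 2 * C (a ^ 2) * H) * Polynomial.X ^ 2).natDegree
                  ≤ (Polynomial.X ^ 2 : Polynomial (MvPolynomial (Fin 4) ℝ)).natDegree :=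
                    Polynomial.natDegree_C_mul_le _ _
                _ < _ := by
                    rw [Polynomial.natDegree_X_pow,
                      Polynomial.natDegree_C_mul_X_pow 4 _ (mul_ne_zero hH0 hH0)]
                    omega
  have hgtrail : g.natTrailingDegree = 0 := by
    rw [Polynomial.natTrailingDegree_eq_zero]
    right
    rw [hgc0]
    exact hc0
  -- psi4 K = 0
  have hq0 : psi4 K = 0 := by
    by_contra hq
    have hrne : r ≠ 0 := by
      intro h
      rw [hmain] at h
      rcases mul_eq_zero.mp h with h' | h'
      exacts [hq h', hgne h']
    have hdegle : r.natDegree ≤ n + 3 := by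
      rw [hrdef]
      refine le_trans (Polynomial.natDegree_add_le _ _) (max_le ?_ ?_)
      · exact le_trans (Polynomial.natDegree_C_mul_le _ _) (by rw [Polynomial.natDegree_X_pow])
      · exact le_trans (Polynomial.natDegree_C_mul_le _ _)
          (by rw [Polynomial.natDegree_X_pow]; omega)
    have htrge : n + 1 ≤ r.natTrailingDegree := by
      refine Polynomial.le_natTrailingDegree hrne fun m hm => ?_
      rw [hrdef]
      simp only [Polynomial.coeff_add, Polynomial.coeff_C_mul, Polynomial.coeff_X_pow]
      rw [if_neg (by omega), if_neg (by omega)]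
      ring
    have hd : r.natDegree = (psi4 K).natDegree + 4 := by
      rw [hmain, Polynomial.natDegree_mul hq hgne, hgdeg]
    have ht : r.natTrailingDegree = (psi4 K).natTrailingDegree := by
      rw [hmain, Polynomial.natTrailingDegree_mul hq hgne, hgtrail, add_zero]
    have := Polynomial.natTrailingDegree_le_natDegree (psi4 K)
    omega
  -- hence K = 0 and chi P (Ga a) = 0
  have hK0 : K = 0 := by
    have := psi4_eval_one K
    rw [hq0, Polynomial.eval_zero] at this
    exact this.symm
  have hr0 : r = 0 := by rw [hmain, hq0, zero_mul]
  have hcoeff3 : (2 * (H * A) : MvPolynomial (Fin 4) ℝ) = 0 := by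
    have := congrArg (fun p => Polynomial.coeff p (n + 3)) hr0
    simp only [hrdef, Polynomial.coeff_add, Polynomial.coeff_C_mul, Polynomial.coeff_X_pow,
      Polynomial.coeff_zero, if_true] at this
    rwa [if_neg (by omega : ¬(n + 3 = n + 1)), mul_one, mul_zero, add_zero] at this
  have hA0 : A = 0 := by
    rcases mul_eq_zero.mp hcoeff3 with h | h
    · exact absurd h two_ne_zero
    · rcases mul_eq_zero.mp h with h' | h'
      · exact absurd h' hH0
      · exact h'
  have hB0 : B = 0 := by
    have := congrArg (fun p => Polynomial.coeff p (n + 1)) hr0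
    simp only [hrdef, Polynomial.coeff_add, Polynomial.coeff_C_mul, Polynomial.coeff_X_pow,
      Polynomial.coeff_zero, if_true] at this
    rw [if_neg (by omega : ¬(n + 1 = n + 3)), mul_one, mul_zero, zero_add] at this
    rw [hA0, mul_zero, sub_zero] at this
    exact this
  exact ⟨hA0, hB0, alg_indep⟩
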